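/- For every permutation π of [n], the permutation P(π) obtained by reversing each maximal descending run of π satisfies the pop-stacked condition: for each pair of adjacent maximal ascending runs Rᵢ, Rᵢ₊₁ of P(π), min Rᵢ < max Rᵢ₊₁. -/

import Mathlib

/-- The maximal descending runs of a list, in order. -/
def descRuns : List ℕ → List (List ℕ)
  | [] => []
  | a :: l =>
    match descRuns l with
    | (b :: r) :: rs => if b < a then (a :: b :: r) :: rs else [a] :: (b :: r) :: rs
    | _ => [[a]]

/-- The maximal ascending runs of a list, in order. -/
def ascRuns : List ℕ → List (List ℕ)
  | [] => []
  | a :: l =>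
    match ascRuns l with
    | (b :: r) :: rs => if a < b then (a :: b :: r) :: rs else [a] :: (b :: r) :: rs
    | _ => [[a]]

/-- The pop-stack operator: reverse each maximal descending run. -/
def popStack (l : List ℕ) : List ℕ := ((descRuns l).map List.reverse).flatten

/-- `l` is (the one-line notation of) a permutation of `[n] = {1,…,n}`. -/
def IsPermOf (n : ℕ) (l : List ℕ) : Prop := l.Perm (List.range' 1 n)

/-- Minimum of a list of naturals. -/
noncomputable def lmin (l : List ℕ) : ℕ := sInf {x | x ∈ l}

/-- Maximum of a list of naturals. -/
def lmax (l : List ℕ) : ℕ := l.foldr max 0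

/-- Minimum of a finset of naturals. -/
noncomputable def bmin (B : Finset ℕ) : ℕ := sInf (B : Set ℕ)

/-- Maximum of a finset of naturals. -/
def bmax (B : Finset ℕ) : ℕ := B.sup id

/-- A ballot (ordered set partition) with underlying set `U`. -/
def IsBallot (U : Finset ℕ) (l : List (Finset ℕ)) : Prop :=
  (∀ B ∈ l, B.Nonempty) ∧ l.Pairwise Disjoint ∧ l.foldr (· ∪ ·) ∅ = U

/-- A ballot is overlapping if adjacent blocks satisfy
`max Bᵢ > min Bᵢ₊₁` and `min Bᵢ < max Bᵢ₊₁`. -/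
def Overlapping (l : List (Finset ℕ)) : Prop :=
  l.Chain' fun B C => bmin C < bmax B ∧ bmin B < bmax C

/-- `σ` is pop-stacked: it is the image of some permutation of `[n]` under `popStack`. -/
def IsPopStacked (n : ℕ) (σ : List ℕ) : Prop :=
  ∃ π, IsPermOf n π ∧ popStack π = σ

/-- `f_{c,d}(n)`: overlapping ballots of `[n]` whose last block has min `c` and max `d`. -/
noncomputable def fcd (c d n : ℕ) : ℕ :=
  Nat.card {l : List (Finset ℕ) // IsBallot (Finset.Icc 1 n) l ∧ Overlapping l ∧
    ∃ B, l.getLast? = some B ∧ bmin B = c ∧ bmax B = d}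

/-- `f_{c,d}(n,k)`: overlapping ballots of `[n]` with `k` blocks whose last block has
min `c` and max `d`. -/
noncomputable def fcdk (c d n k : ℕ) : ℕ :=
  Nat.card {l : List (Finset ℕ) // IsBallot (Finset.Icc 1 n) l ∧ Overlapping l ∧
    l.length = k ∧ ∃ B, l.getLast? = some B ∧ bmin B = c ∧ bmax B = d}

/-- The number of pop-stacked permutations of `[n]`. -/
noncomputable def popCount (n : ℕ) : ℕ :=
  Nat.card {σ : List ℕ // IsPermOf n σ ∧ IsPopStacked n σ}

/-- The number of pop-stacked permutations of `[n]` with exactly `k` ascending runs. -/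
noncomputable def popCountK (n k : ℕ) : ℕ :=
  Nat.card {σ : List ℕ // IsPermOf n σ ∧ IsPopStacked n σ ∧ (ascRuns σ).length = k}

/-- Greedy sorting with a pop-stack whose contents increase from top to bottom:
push when possible, otherwise pop the whole stack. -/
def greedyPop : List ℕ → List ℕ → List ℕ
  | stack, [] => stack
  | [], a :: rest => greedyPop [a] rest
  | t :: s, a :: rest =>
    if a < t then greedyPop (a :: t :: s) rest
    else (t :: s) ++ greedyPop [a] rest

lemma ascRuns_cons_lt {a b : ℕ} {l r : List ℕ} {rs : List (List ℕ)}
    (hab : a < b) (h : ascRuns l = (b :: r) :: rs) :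
    ascRuns (a :: l) = (a :: b :: r) :: rs := by
  simp [ascRuns, h, hab]

lemma ascRuns_cons_ge {a b : ℕ} {l r : List ℕ} {rs : List (List ℕ)}
    (hab : ¬ a < b) (h : ascRuns l = (b :: r) :: rs) :
    ascRuns (a :: l) = [a] :: (b :: r) :: rs := by
  simp [ascRuns, h, hab]

lemma ascRuns_first (a : ℕ) (t : List ℕ) :
    ∃ r rs, ascRuns (a :: t) = (a :: r) :: rs := by
  cases h : ascRuns t with
  | nil => exact ⟨[], [], by simp [ascRuns, h]⟩
  | cons R rs =>
    cases R with
    | nil => exact ⟨[], [], by simp [ascRuns, h]⟩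
    | cons b r =>
      by_cases hab : a < b
      · exact ⟨b :: r, rs, ascRuns_cons_lt hab h⟩
      · exact ⟨[], (b :: r) :: rs, ascRuns_cons_ge hab h⟩

lemma block_prepend_lt : ∀ (B : List ℕ), B ≠ [] → B.Chain' (· < ·) →
    ∀ {g x : ℕ} {t r : List ℕ} {rs : List (List ℕ)}, B.getLast? = some g → g < x →
    ascRuns (x :: t) = (x :: r) :: rs →
    ascRuns (B ++ x :: t) = (B ++ x :: r) :: rs
  | [], h, _, _, _, _, _, _, _, _, _ => absurd rfl h
  | [a], _, _, g, x, t, r, rs, hg, hgx, h => by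
    simp at hg; subst hg
    simpa using ascRuns_cons_lt hgx h
  | a :: b :: B', _, hch, g, x, t, r, rs, hg, hgx, h => by
    rw [List.Chain', List.isChain_cons_cons] at hch
    have ih := block_prepend_lt (b :: B') (by simp) hch.2
      (by simpa [List.getLast?_cons_cons] using hg) hgx h
    have := ascRuns_cons_lt (l := (b :: B') ++ x :: t) (a := a) hch.1 (by simpa using ih)
    simpa using this

lemma block_prepend_ge : ∀ (B : List ℕ), B ≠ [] → B.Chain' (· < ·) →
    ∀ {g x : ℕ} {t r : List ℕ} {rs : List (List ℕ)}, B.getLast? = some g → ¬ g < x →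
    ascRuns (x :: t) = (x :: r) :: rs →
    ascRuns (B ++ x :: t) = B :: (x :: r) :: rs
  | [], h, _, _, _, _, _, _, _, _, _ => absurd rfl h
  | [a], _, _, g, x, t, r, rs, hg, hgx, h => by
    simp at hg; subst hg
    simpa using ascRuns_cons_ge hgx h
  | a :: b :: B', _, hch, g, x, t, r, rs, hg, hgx, h => by
    rw [List.Chain', List.isChain_cons_cons] at hch
    have ih := block_prepend_ge (b :: B') (by simp) hch.2
      (by simpa [List.getLast?_cons_cons] using hg) hgx h
    have := ascRuns_cons_lt (l := (b :: B') ++ x :: t) (a := a) hch.1 (by simpa using ih)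
    simpa using this

lemma ascRuns_self : ∀ (B : List ℕ), B ≠ [] → B.Chain' (· < ·) → ascRuns B = [B]
  | [], h, _ => absurd rfl h
  | [a], _, _ => by simp [ascRuns]
  | a :: b :: B', _, hch => by
    rw [List.Chain', List.isChain_cons_cons] at hch
    have ih := ascRuns_self (b :: B') (by simp) hch.2
    exact ascRuns_cons_lt hch.1 ih

lemma first_run (C : List ℕ) (hne : C ≠ []) (hC : C.Chain' (· < ·)) (t : List ℕ) :
    ∃ r rs, ascRuns (C ++ t) = (C ++ r) :: rs := by
  cases t with
  | nil => exact ⟨[], [], by simpa using ascRuns_self C hne hC⟩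
  | cons y t' =>
    obtain ⟨r1, rs1, h1⟩ := ascRuns_first y t'
    have hg : C.getLast? = some (C.getLast hne) := List.getLast?_eq_getLast hne
    by_cases hgy : C.getLast hne < y
    · exact ⟨y :: r1, rs1, block_prepend_lt C hne hC hg hgy h1⟩
    · exact ⟨[], (y :: r1) :: rs1, by simpa using block_prepend_ge C hne hC hg hgy h1⟩

lemma lmin_le {a : ℕ} {l : List ℕ} (h : a ∈ l) : lmin l ≤ a := Nat.sInf_le h

lemma le_lmax {a : ℕ} {l : List ℕ} (h : a ∈ l) : a ≤ lmax l := by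
  induction l with
  | nil => simp at h
  | cons b t ih =>
    rcases List.mem_cons.mp h with rfl | h
    · exact le_max_left _ _ |>.trans (le_refl _) |>.trans_eq rfl
    · exact (ih h).trans (le_max_right _ _)

lemma lmin_append_le {u v : List ℕ} (hv : v ≠ []) : lmin (u ++ v) ≤ lmin v := by
  have hne : {x | x ∈ v}.Nonempty := by
    cases v with
    | nil => exact absurd rfl hv
    | cons a t => exact ⟨a, by simp⟩
  have hmem : lmin v ∈ v := Nat.sInf_mem hne
  exact lmin_le (by simp [hmem])

lemma ascChain : ∀ (bs : List (List ℕ)), (∀ B ∈ bs, B ≠ []) → (∀ B ∈ bs, B.Chain' (· < ·)) →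
    bs.Chain' (fun B C => ∃ a b, B.head? = some a ∧ C.getLast? = some b ∧ a < b) →
    (ascRuns bs.flatten).Chain' (fun R S => lmin R < lmax S)
  | [], _, _, _ => by simp [ascRuns, List.Chain']
  | [B], hne, hasc, _ => by
    have h := ascRuns_self B (hne B (by simp)) (hasc B (by simp))
    simp [h, List.Chain']
  | B :: C :: bs', hne, hasc, hch => by
    have hBne : B ≠ [] := hne B (by simp)
    have hCne : C ≠ [] := hne C (by simp)
    have hBasc := hasc B (by simp)
    have hCasc := hasc C (by simp)
    rw [List.Chain', List.isChain_cons_cons] at hch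
    have ih := ascChain (C :: bs') (fun D hD => hne D (by simp [hD]))
      (fun D hD => hasc D (by simp [hD])) hch.2
    -- structure of ascRuns of tail flatten
    obtain ⟨r, rs, hfr⟩ := first_run C hCne hCasc bs'.flatten
    have htail : (C :: bs').flatten = C ++ bs'.flatten := by simp
    rw [htail] at ih
    rw [hfr] at ih
    -- C = x :: C'
    obtain ⟨x, C', rfl⟩ : ∃ x C', C = x :: C' := by
      cases C with
      | nil => exact absurd rfl hCne
      | cons x C' => exact ⟨x, C', rfl⟩
    have hg : B.getLast? = some (B.getLast hBne) := List.getLast?_eq_getLast hBne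
    have hflat : (B :: (x :: C') :: bs').flatten = B ++ (x :: (C' ++ bs'.flatten)) := by simp
    have hfr' : ascRuns (x :: (C' ++ bs'.flatten)) = (x :: (C' ++ r)) :: rs := by
      simpa using hfr
    by_cases hlt : B.getLast hBne < x
    · have := block_prepend_lt B hBne hBasc hg hlt hfr'
      rw [hflat, this]
      rw [List.Chain', List.isChain_cons] at ih ⊢
      refine ⟨fun S hS => ?_, ih.2⟩
      have h1 := ih.1 S hS
      calc lmin (B ++ x :: (C' ++ r)) ≤ lmin ((x :: C') ++ r) := by
            apply lmin_append_le; simp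
        _ = lmin (x :: (C' ++ r)) := by simp
        _ < lmax S := by simpa using h1
    · have := block_prepend_ge B hBne hBasc hg hlt hfr'
      rw [hflat, this]
      rw [List.Chain', List.isChain_cons_cons]
      constructor
      · obtain ⟨a, b, hha, hhb, hab⟩ := hch.1
        have haB : a ∈ B := List.mem_of_mem_head? hha
        have hbC : b ∈ x :: C' := List.mem_of_mem_getLast? hhb
        have : b ∈ x :: (C' ++ r) := by
          rcases List.mem_cons.mp hbC with rfl | hb
          · simp
          · simp [hb]
        exact lt_of_le_of_lt (lmin_le haB) (lt_of_lt_of_le hab (le_lmax this))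
      · exact ih

lemma descRuns_spec : ∀ (l : List ℕ), l.Nodup →
    (descRuns l).flatten = l ∧ (∀ D ∈ descRuns l, D ≠ []) ∧
    (∀ D ∈ descRuns l, D.Chain' (· > ·)) ∧
    (descRuns l).Chain' (fun D E => ∃ a b, D.getLast? = some a ∧ E.head? = some b ∧ a < b)
  | [], _ => by simp [descRuns, List.Chain']
  | a :: l, hnd => by
    have hal : a ∉ l := (List.nodup_cons.mp hnd).1
    have ih := descRuns_spec l (List.nodup_cons.mp hnd).2
    obtain ⟨ihf, ihne, ihasc, ihch⟩ := ih
    cases h : descRuns l with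
    | nil =>
      have hl : l = [] := by rw [h] at ihf; simpa using ihf.symm
      subst hl
      simp [descRuns, h, List.Chain']
    | cons D rs =>
      cases D with
      | nil => exact absurd rfl (ihne [] (by rw [h]; simp))
      | cons b r =>
        rw [h] at ihf ihne ihasc ihch
        by_cases hba : b < a
        · have hd : descRuns (a :: l) = (a :: b :: r) :: rs := by simp [descRuns, h, hba]
          refine ⟨?_, ?_, ?_, ?_⟩
          · simp at ihf ⊢; simp [hd, ihf]
          · intro D hD
            rw [hd] at hD
            rcases List.mem_cons.mp hD with rfl | hD
            · simp
            · exact ihne D (by simp [hD])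
          · intro D hD
            rw [hd] at hD
            rcases List.mem_cons.mp hD with rfl | hD
            · exact List.isChain_cons_cons.mpr ⟨hba, ihasc (b :: r) (by simp)⟩
            · exact ihasc D (by simp [hD])
          · rw [hd]
            rw [List.Chain', List.isChain_cons] at ihch ⊢
            refine ⟨fun E hE => ?_, ihch.2⟩
            obtain ⟨c, d, hc, hd', hcd⟩ := ihch.1 E hE
            exact ⟨c, d, by rw [List.getLast?_cons_cons]; exact hc, hd', hcd⟩
        · have hd : descRuns (a :: l) = [a] :: (b :: r) :: rs := by simp [descRuns, h, hba]
          have hbl : b ∈ l := by rw [← ihf]; simp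
          have hab : a < b := lt_of_le_of_ne (not_lt.mp hba) (fun e => hal (e ▸ hbl))
          refine ⟨?_, ?_, ?_, ?_⟩
          · simp [hd]; simpa using ihf
          · intro D hD
            rw [hd] at hD
            rcases List.mem_cons.mp hD with rfl | hD
            · simp
            · exact ihne D hD
          · intro D hD
            rw [hd] at hD
            rcases List.mem_cons.mp hD with rfl | hD
            · simp [List.Chain']
            · exact ihasc D hD
          · rw [hd, List.Chain', List.isChain_cons_cons]
            exact ⟨⟨a, b, rfl, rfl, hab⟩, ihch⟩

/-- for any permutation `π` of `[n]`, `P(π)` satisfies the pop-stacked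
condition on adjacent ascending runs. -/
theorem statement14 (n : ℕ) (π : List ℕ) (hπ : IsPermOf n π) :
    (ascRuns (popStack π)).Chain' (fun R S => lmin R < lmax S) := by
  have hπ : π.Perm (List.range' 1 n) := hπ
  have hnd : π.Nodup := hπ.nodup_iff.mpr (List.nodup_range' (s := 1) (n := n))
  obtain ⟨hf, hne, hdesc, hch⟩ := descRuns_spec π hnd
  have : popStack π = ((descRuns π).map List.reverse).flatten := rfl
  rw [this]
  apply ascChain
  · intro B hB
    obtain ⟨D, hD, rfl⟩ := List.mem_map.mp hB
    simpa using hne D hD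
  · intro B hB
    obtain ⟨D, hD, rfl⟩ := List.mem_map.mp hB
    have := hdesc D hD
    rw [List.Chain', List.isChain_reverse]
    simpa [flip, List.Chain'] using this
  · rw [List.Chain', List.isChain_map]
    refine List.IsChain.imp ?_ hch
    intro D E ⟨a, b, ha, hb, hab⟩
    exact ⟨a, b, by simpa using ha, by simpa using hb, hab⟩
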